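/- arXiv:2009.08569 — 4 statements merged into one kernel-verified Lean document; each statement's English description precedes it below -/
import Mathlib

section
/- Let M ∈ R^{3×3} be symmetric positive semi-definite. Then the matrix M̄ = (1/2)(tr(M)I₃ - M) is positive definite if and only if M has at least two strictly positive eigenvalues. -/
open Matrix

lemma myPosDef_mul_mul_conjTranspose {n : Type*} [Fintype n] [DecidableEq n]
    {A : Matrix n n ℝ} (hA : A.PosDef) (U : Matrix.unitaryGroup n ℝ) :
    ((U : Matrix n n ℝ) * A * (U : Matrix n n ℝ)ᴴ).PosDef := by
  refine Matrix.PosDef.of_dotProduct_mulVec_pos ?_ ?_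
  · simpa only [conjTranspose_conjTranspose] using
      Matrix.isHermitian_conjTranspose_mul_mul (U : Matrix n n ℝ)ᴴ hA.1
  · intro x hx
    have hU : (U : Matrix n n ℝ) * (U : Matrix n n ℝ)ᴴ = 1 :=
      Matrix.mem_unitaryGroup_iff.mp U.2
    have hx' : (U : Matrix n n ℝ)ᴴ *ᵥ x ≠ 0 := by
      intro h
      apply hx
      have := congrArg (fun y => (U : Matrix n n ℝ) *ᵥ y) h
      simpa only [Matrix.mulVec_mulVec, hU, Matrix.one_mulVec, Matrix.mulVec_zero] using this
    simpa only [star_mulVec, dotProduct_mulVec, vecMul_vecMul, conjTranspose_conjTranspose]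
      using hA.dotProduct_mulVec_pos hx'

lemma myPosDef_iff_eigenvalues_pos {n : Type*} [Fintype n] [DecidableEq n]
    {A : Matrix n n ℝ} (hA : A.IsHermitian) :
    A.PosDef ↔ ∀ i, 0 < hA.eigenvalues i := by
  constructor
  · intro h i
    exact h.eigenvalues_pos i
  · intro h
    rw [hA.spectral_theorem]
    have hd : (Matrix.diagonal (RCLike.ofReal ∘ hA.eigenvalues) : Matrix n n ℝ).PosDef := by
      rw [Matrix.posDef_diagonal_iff]
      simpa using h
    simpa [Unitary.coe_star, Matrix.star_eq_conjTranspose] using myPosDef_mul_mul_conjTranspose hd hA.eigenvectorUnitary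

/-- For symmetric PSD `M ∈ ℝ³ˣ³`, `M̄ = (1/2)(tr(M)I₃ - M)` is positive
definite iff `M` has at least two strictly positive eigenvalues. -/
theorem Mbar_posdef_iff (M : Matrix (Fin 3) (Fin 3) ℝ)
    (hpsd : M.PosSemidef) (hherm : M.IsHermitian) :
    ((2 : ℝ)⁻¹ • (M.trace • (1 : Matrix (Fin 3) (Fin 3) ℝ) - M)).PosDef ↔
      ∃ i j : Fin 3, i ≠ j ∧ 0 < hherm.eigenvalues i ∧ 0 < hherm.eigenvalues j := by
  set U : Matrix (Fin 3) (Fin 3) ℝ := (hherm.eigenvectorUnitary : Matrix (Fin 3) (Fin 3) ℝ)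
  set lam := hherm.eigenvalues with hlam
  set t := M.trace with ht
  have hU1 : U * Uᴴ = 1 := Matrix.mem_unitaryGroup_iff.mp hherm.eigenvectorUnitary.2
  have hU1' : Uᴴ * U = 1 := Matrix.mem_unitaryGroup_iff'.mp hherm.eigenvectorUnitary.2
  have hspec : M = U * Matrix.diagonal lam * Uᴴ := by
    have := hherm.spectral_theorem
    simpa [U, Unitary.coe_star, Matrix.star_eq_conjTranspose] using this
  -- trace = sum of eigenvalues
  have htr : t = ∑ i, lam i := by
    rw [ht, hspec, Matrix.trace_mul_cycle, hU1', Matrix.one_mul, Matrix.trace_diagonal]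
  -- rewrite Mbar as conjugated diagonal
  have hMbar : (2 : ℝ)⁻¹ • (t • (1 : Matrix (Fin 3) (Fin 3) ℝ) - M)
      = U * Matrix.diagonal (fun i => (2 : ℝ)⁻¹ * (t - lam i)) * Uᴴ := by
    rw [hspec]
    have h1 : (1 : Matrix (Fin 3) (Fin 3) ℝ) = U * 1 * Uᴴ := by
      rw [Matrix.mul_one, hU1]
    rw [h1]
    calc (2 : ℝ)⁻¹ • (t • (U * 1 * Uᴴ) - U * Matrix.diagonal lam * Uᴴ)
        = U * ((2 : ℝ)⁻¹ • (t • (1 : Matrix (Fin 3) (Fin 3) ℝ) - Matrix.diagonal lam)) * Uᴴ := by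
          rw [Matrix.mul_smul, Matrix.smul_mul, Matrix.mul_sub, Matrix.sub_mul,
            Matrix.mul_smul, Matrix.smul_mul]
      _ = U * Matrix.diagonal (fun i => (2 : ℝ)⁻¹ * (t - lam i)) * Uᴴ := by
          congr 1
          congr 1
          ext i j
          by_cases h : i = j <;>
            simp [Matrix.diagonal, Matrix.one_apply, h, mul_comm, mul_sub]
  have key : ((2 : ℝ)⁻¹ • (t • (1 : Matrix (Fin 3) (Fin 3) ℝ) - M)).PosDef
      ↔ ∀ i, 0 < (2 : ℝ)⁻¹ * (t - lam i) := by
    rw [hMbar]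
    constructor
    · intro h
      rw [← Matrix.posDef_diagonal_iff (d := fun i => (2 : ℝ)⁻¹ * (t - lam i))]
      have h2 := myPosDef_mul_mul_conjTranspose h (star hherm.eigenvectorUnitary)
      have heq : (Uᴴ * (U * Matrix.diagonal (fun i => (2 : ℝ)⁻¹ * (t - lam i)) * Uᴴ) * U)
          = Matrix.diagonal (fun i => (2 : ℝ)⁻¹ * (t - lam i)) := by
        rw [← Matrix.mul_assoc, ← Matrix.mul_assoc, hU1', Matrix.one_mul,
          Matrix.mul_assoc, hU1', Matrix.mul_one]
      rw [← heq]
      simpa [Unitary.coe_star, Matrix.star_eq_conjTranspose, U] using h2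
    · intro h
      have hd : (Matrix.diagonal (fun i => (2 : ℝ)⁻¹ * (t - lam i))).PosDef :=
        Matrix.posDef_diagonal_iff.mpr h
      simpa [Unitary.coe_star, Matrix.star_eq_conjTranspose, U] using
        myPosDef_mul_mul_conjTranspose hd hherm.eigenvectorUnitary
  rw [key]
  have hnn : ∀ i, 0 ≤ lam i := fun i => hpsd.eigenvalues_nonneg i
  have h0 := hnn 0
  have h1 := hnn 1
  have h2 := hnn 2
  have hsum : t = lam 0 + lam 1 + lam 2 := by
    rw [htr, Fin.sum_univ_three]
  constructor
  · intro h
    have s0 := h 0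
    have s1 := h 1
    have s2 := h 2
    rw [hsum] at s0 s1 s2
    rcases lt_or_ge 0 (lam 0) with p0 | p0
    · rcases lt_or_ge 0 (lam 1) with p1 | p1
      · exact ⟨0, 1, by decide, p0, p1⟩
      · refine ⟨0, 2, by decide, p0, ?_⟩
        nlinarith
    · rcases lt_or_ge 0 (lam 1) with p1 | p1
      · refine ⟨1, 2, by decide, p1, ?_⟩
        nlinarith
      · exfalso; nlinarith
  · rintro ⟨i, j, hij, hi, hj⟩ k
    obtain ⟨m, hmk, hm⟩ : ∃ m, m ≠ k ∧ 0 < lam m := by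
      rcases eq_or_ne i k with rfl | hne
      · exact ⟨j, fun h' => hij h'.symm, hj⟩
      · exact ⟨i, hne, hi⟩
    have hpair : lam k + lam m = ∑ x ∈ ({k, m} : Finset (Fin 3)), lam x :=
      (Finset.sum_pair (Ne.symm hmk)).symm
    have hle : ∑ x ∈ ({k, m} : Finset (Fin 3)), lam x ≤ ∑ x, lam x :=
      Finset.sum_le_sum_of_subset_of_nonneg (Finset.subset_univ _) (fun x _ _ => hnn x)
    rw [htr]
    nlinarith [hpair, hle, hm]
end

section
/- Let R̃ ∈ SO(3) and M ∈ R^{3×3} symmetric positive semi-definite with M̄ = (1/2)(tr(M)I₃ - M) positive definite. If ψ(MR̃) = 0 and R̃ ≠ I₃, then R̃ is a rotation by angle π about an eigenvector of M. -/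
open Matrix

noncomputable section

def SO3 (R : Matrix (Fin 3) (Fin 3) ℝ) : Prop :=
  Rᵀ * R = 1 ∧ R * Rᵀ = 1 ∧ R.det = 1

def psi (A : Matrix (Fin 3) (Fin 3) ℝ) : Fin 3 → ℝ :=
  (2 : ℝ)⁻¹ • ![A 2 1 - A 1 2, A 0 2 - A 2 0, A 1 0 - A 0 1]


lemma ch3 (A : Matrix (Fin 3) (Fin 3) ℝ) :
    A * A * A = A.trace • (A * A) - (((A.trace)^2 - (A*A).trace)/2) • A + A.det • (1 : Matrix (Fin 3) (Fin 3) ℝ) := by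
  ext i j
  simp only [Matrix.mul_apply, Fin.sum_univ_three, Matrix.trace_fin_three, Matrix.det_fin_three,
    Matrix.add_apply, Matrix.sub_apply, Matrix.smul_apply, smul_eq_mul, Matrix.one_apply]
  fin_cases i <;> fin_cases j <;> simp <;> ring


lemma adj3 (A : Matrix (Fin 3) (Fin 3) ℝ) :
    A.adjugate = A * A - A.trace • A +
      (((A.trace)^2 - (A*A).trace)/2) • (1 : Matrix (Fin 3) (Fin 3) ℝ) := by
  rw [Matrix.adjugate_fin_three]
  ext i j
  simp only [Matrix.mul_apply, Fin.sum_univ_three, Matrix.trace_fin_three,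
    Matrix.add_apply, Matrix.sub_apply, Matrix.smul_apply, smul_eq_mul, Matrix.one_apply]
  fin_cases i <;> fin_cases j <;> simp <;> ring

lemma rank_one_proj (P : Matrix (Fin 3) (Fin 3) ℝ)
    (hsym : ∀ i k, P i k = P k i) (hPP : P * P = P)
    (htr : P 0 0 + P 1 1 + P 2 2 = 1) :
    ∃ u : Fin 3 → ℝ, u ⬝ᵥ u = 1 ∧ vecMulVec u u = P := by
  have hadj : P.adjugate = 0 := by
    rw [adj3, hPP]
    have h1 : P.trace = 1 := by rw [Matrix.trace_fin_three]; exact htr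
    rw [h1]
    simp
  rw [Matrix.adjugate_fin_three] at hadj
  have h00 : P 1 1 * P 2 2 - P 1 2 * P 2 1 = 0 := by
    simpa using congrFun (congrFun hadj 0) 0
  have h01 : -(P 0 1 * P 2 2) + P 0 2 * P 2 1 = 0 := by
    simpa using congrFun (congrFun hadj 0) 1
  have h02 : P 0 1 * P 1 2 - P 0 2 * P 1 1 = 0 := by
    simpa using congrFun (congrFun hadj 0) 2
  have h10 : -(P 1 0 * P 2 2) + P 1 2 * P 2 0 = 0 := by
    simpa using congrFun (congrFun hadj 1) 0
  have h11 : P 0 0 * P 2 2 - P 0 2 * P 2 0 = 0 := by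
    simpa using congrFun (congrFun hadj 1) 1
  have h12 : -(P 0 0 * P 1 2) + P 0 2 * P 1 0 = 0 := by
    simpa using congrFun (congrFun hadj 1) 2
  have h20 : P 1 0 * P 2 1 - P 1 1 * P 2 0 = 0 := by
    simpa using congrFun (congrFun hadj 2) 0
  have h21 : -(P 0 0 * P 2 1) + P 0 1 * P 2 0 = 0 := by
    simpa using congrFun (congrFun hadj 2) 1
  have h22 : P 0 0 * P 1 1 - P 0 1 * P 1 0 = 0 := by
    simpa using congrFun (congrFun hadj 2) 2
  have s01 := hsym 0 1; have s02 := hsym 0 2; have s12 := hsym 1 2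
  have key : ∀ i k j, P i k * P j j = P i j * P j k := by
    intro i k j
    fin_cases i <;> fin_cases k <;> fin_cases j <;>
      (try simp only [Fin.zero_eta, Fin.mk_one, Fin.reduceFinMk]) <;>
      first
        | ring1
        | (linear_combination h00; done) | (linear_combination -h00; done)
        | (linear_combination h01; done) | (linear_combination -h01; done)
        | (linear_combination h02; done) | (linear_combination -h02; done)
        | (linear_combination h10; done) | (linear_combination -h10; done)
        | (linear_combination h11; done) | (linear_combination -h11; done)
        | (linear_combination h12; done) | (linear_combination -h12; done)
        | (linear_combination h20; done) | (linear_combination -h20; done)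
        | (linear_combination h21; done) | (linear_combination -h21; done)
        | (linear_combination h22; done) | (linear_combination -h22; done)
        | (linear_combination h00 + P 1 1 * s01; done) | (linear_combination -h00 - P 1 1 * s01; done)
        | (linear_combination h22 - P 1 1 * s12; done) | (linear_combination -h22 + P 1 1 * s12; done)
        | (linear_combination h11 + P 0 0 * s02; done) | (linear_combination -h11 - P 0 0 * s02; done)
        | (linear_combination h01 + P 2 2 * s01; done) | (linear_combination -h01 - P 2 2 * s01; done)
        | (linear_combination h02 + P 1 1 * s02; done) | (linear_combination -h02 - P 1 1 * s02; done)
        | (linear_combination h12 + P 0 0 * s12; done) | (linear_combination -h12 - P 0 0 * s12; done)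
        | nlinarith [h00,h01,h02,h10,h11,h12,h20,h21,h22,s01,s02,s12]
  obtain ⟨j, hj⟩ : ∃ j, 0 < P j j := by
    by_contra hcon
    push_neg at hcon
    have := hcon 0; have := hcon 1; have := hcon 2
    linarith
  have hdiag : P 0 j * P 0 j + P 1 j * P 1 j + P 2 j * P 2 j = P j j := by
    have h := congrFun (congrFun hPP j) j
    simp only [Matrix.mul_apply, Fin.sum_univ_three] at h
    linear_combination h - P 0 j * hsym j 0 - P 1 j * hsym j 1 - P 2 j * hsym j 2
  set q := Real.sqrt (P j j) with hqdef
  have hq : 0 < q := Real.sqrt_pos.mpr hj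
  have hq2 : q * q = P j j := Real.mul_self_sqrt hj.le
  refine ⟨fun i => P i j / q, ?_, ?_⟩
  · show (fun i => P i j / q) ⬝ᵥ (fun i => P i j / q) = 1
    simp only [dotProduct, Fin.sum_univ_three]
    field_simp
    linear_combination hdiag - hq2
  · ext i k
    rw [Matrix.vecMulVec_apply]
    show (P i j / q) * (P k j / q) = P i k
    rw [div_mul_div_comm, hq2, div_eq_iff (ne_of_gt hj)]
    calc P i j * P k j = P i j * P j k := by rw [hsym k j]
    _ = P i k * P j j := (key i k j).symm


/-- If `R̃ ∈ SO(3)`, `M` is symmetric PSD with `M̄ = (1/2)(tr(M)I - M)` positive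
definite, `ψ(MR̃) = 0` and `R̃ ≠ I`, then `R̃` is a rotation by angle `π` about a
unit eigenvector `u` of `M`, i.e. `R̃ = 2uuᵀ - I`. -/
theorem critical_points_are_pi_rotations
    (Rt M : Matrix (Fin 3) (Fin 3) ℝ) (hR : SO3 Rt)
    (hMsym : Mᵀ = M) (hMpsd : M.PosSemidef)
    (hMbar : ((2 : ℝ)⁻¹ • (M.trace • (1 : Matrix (Fin 3) (Fin 3) ℝ) - M)).PosDef)
    (hcrit : psi (M * Rt) = 0) (hne : Rt ≠ 1) :
    ∃ u : Fin 3 → ℝ, u ⬝ᵥ u = 1 ∧ (∃ μ : ℝ, M.mulVec u = μ • u) ∧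
      Rt = (2 : ℝ) • vecMulVec u u - 1 := by
  -- three scalar equations from criticality
  have e0 := congrFun hcrit 0
  have e1 := congrFun hcrit 1
  have e2 := congrFun hcrit 2
  simp only [psi, Pi.smul_apply, Matrix.cons_val_zero, Matrix.cons_val_one, Matrix.head_cons,
    Pi.zero_apply, smul_eq_mul, Matrix.cons_val_two, Matrix.tail_cons, mul_eq_zero,
    inv_eq_zero, OfNat.ofNat_ne_zero, false_or, sub_eq_zero] at e0 e1 e2
  -- MR is symmetric
  have hMRsym : (M * Rt)ᵀ = M * Rt := by
    ext i j
    rw [Matrix.transpose_apply]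
    fin_cases i <;> fin_cases j <;>
      (try simp only [Fin.zero_eta, Fin.mk_one, Fin.reduceFinMk]) <;>
      first | rfl | linarith [e0, e1, e2]
  have hMRt : M * Rt = Rtᵀ * M := by
    conv_lhs => rw [← hMRsym]
    rw [Matrix.transpose_mul, hMsym]
  have hRMR : Rt * M * Rt = M := by
    rw [Matrix.mul_assoc, hMRt, ← Matrix.mul_assoc, hR.2.1, Matrix.one_mul]
  have hRtM : Rt * M = M * Rtᵀ := by
    have := congrArg (· * Rtᵀ) hRMR
    simpa [Matrix.mul_assoc, hR.2.1] using this
  have hAC : M * (Rt - Rtᵀ) + (Rt - Rtᵀ) * M = 0 := by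
    rw [Matrix.mul_sub, Matrix.sub_mul, hMRt, ← hRtM]
    abel
  -- M entries symmetry
  have hm : ∀ i j, M j i = M i j := by
    intro i j
    exact congrFun (congrFun hMsym i) j
  -- anticommutation kills the skew part via positive definiteness of Mbar
  set s : Fin 3 → ℝ := ![Rt 2 1 - Rt 1 2, Rt 0 2 - Rt 2 0, Rt 1 0 - Rt 0 1] with hsdef
  have ha : ∀ i j, (M * (Rt - Rtᵀ) + (Rt - Rtᵀ) * M) i j = 0 := by
    intro i j; rw [hAC]; rfl
  have hs : ((2 : ℝ)⁻¹ • (M.trace • (1 : Matrix (Fin 3) (Fin 3) ℝ) - M)) *ᵥ s = 0 := by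
    have ha21 := ha 2 1
    have ha02 := ha 0 2
    have ha10 := ha 1 0
    simp only [Matrix.add_apply, Matrix.mul_apply, Matrix.sub_apply, Matrix.transpose_apply,
      Fin.sum_univ_three] at ha21 ha02 ha10
    ext k
    simp only [Matrix.mulVec, dotProduct, Fin.sum_univ_three, Matrix.smul_apply,
      Matrix.sub_apply, Matrix.trace_fin_three, Matrix.one_apply, Pi.zero_apply, smul_eq_mul]
    fin_cases k <;>
      (try simp only [Fin.zero_eta, Fin.mk_one, Fin.reduceFinMk]) <;>
      simp only [hsdef, Matrix.cons_val_zero, Matrix.cons_val_one, Matrix.head_cons,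
        Matrix.cons_val_two, Matrix.tail_cons] <;> simp <;>
      first
      | (linear_combination (1/2 : ℝ) * ha21 + (1/2 : ℝ)*(Rt 1 0 - Rt 0 1) * hm 0 2; done)
      | (linear_combination (1/2 : ℝ) * ha02 + (1/2 : ℝ)*(Rt 2 1 - Rt 1 2) * hm 1 0; done)
      | (linear_combination (1/2 : ℝ) * ha10 + (1/2 : ℝ)*(Rt 0 2 - Rt 2 0) * hm 2 1; done)
  have hs0 : s = 0 := by
    by_contra hsne
    have := hMbar.dotProduct_mulVec_pos hsne
    rw [hs] at this
    simp at this
  have hsymR : ∀ i k, Rt i k = Rt k i := by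
    have c0 := congrFun hs0 0
    have c1 := congrFun hs0 1
    have c2 := congrFun hs0 2
    simp only [hsdef, Matrix.cons_val_zero, Matrix.cons_val_one, Matrix.head_cons,
      Matrix.cons_val_two, Matrix.tail_cons, Pi.zero_apply, sub_eq_zero] at c0 c1 c2
    intro i k
    fin_cases i <;> fin_cases k <;>
      (try simp only [Fin.zero_eta, Fin.mk_one, Fin.reduceFinMk]) <;>
      first | rfl | linarith [c0, c1, c2]
  have hRsym : Rtᵀ = Rt := by
    ext i j; rw [Matrix.transpose_apply]; exact hsymR j i
  have hR2 : Rt * Rt = 1 := by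
    have h := hR.1
    rwa [hRsym] at h
  -- Cayley–Hamilton consequence
  have hch := ch3 Rt
  rw [hR2] at hch
  rw [Matrix.one_mul, Matrix.trace_one, hR.2.2] at hch
  simp only [Fintype.card_fin, Nat.cast_ofNat] at hch
  set t := Rt.trace with htdef
  have key2 : ∀ i j, ((t^2 - 1)/2) * Rt i j = (t + 1) * (1 : Matrix (Fin 3) (Fin 3) ℝ) i j := by
    intro i j
    have h := congrFun (congrFun hch i) j
    simp only [Matrix.add_apply, Matrix.sub_apply, Matrix.smul_apply, smul_eq_mul] at h
    linear_combination h
  by_cases ht : t = -1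
  · -- the projection P = (Rt + 1)/2
    set P : Matrix (Fin 3) (Fin 3) ℝ := (2:ℝ)⁻¹ • (Rt + 1) with hPdef
    have hPsym : ∀ i k, P i k = P k i := by
      intro i k
      simp only [hPdef, Matrix.smul_apply, Matrix.add_apply, smul_eq_mul]
      rw [hsymR i k]
      congr 2
      simp [Matrix.one_apply, eq_comm]
    have hexpand : (Rt + 1) * (Rt + 1) = (2:ℝ) • (Rt + 1) := by
      rw [add_mul, mul_add, mul_add, hR2, Matrix.mul_one, Matrix.one_mul, Matrix.one_mul]
      module
    have hPP : P * P = P := by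
      rw [hPdef, Matrix.smul_mul, Matrix.mul_smul, hexpand]
      module
    have htrace : Rt 0 0 + Rt 1 1 + Rt 2 2 = -1 := by
      rw [htdef, Matrix.trace_fin_three] at ht; linarith [ht]
    have htrP : P 0 0 + P 1 1 + P 2 2 = 1 := by
      simp only [hPdef, Matrix.smul_apply, Matrix.add_apply, Matrix.one_apply, smul_eq_mul]
      norm_num
      linarith [htrace]
    obtain ⟨u, hu1, hu2⟩ := rank_one_proj P hPsym hPP htrP
    have hcomm : M * Rt = Rt * M := by
      rw [hMRt, hRsym]
    have hMP : M * P = P * M := by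
      rw [hPdef, Matrix.mul_smul, Matrix.smul_mul, mul_add, add_mul, hcomm,
        Matrix.mul_one, Matrix.one_mul]
    have hu1' : u 0 * u 0 + u 1 * u 1 + u 2 * u 2 = 1 := by
      simpa [dotProduct, Fin.sum_univ_three] using hu1
    have hPu : P *ᵥ u = u := by
      rw [← hu2]
      ext i
      simp only [Matrix.mulVec, dotProduct, Fin.sum_univ_three, Matrix.vecMulVec_apply]
      linear_combination u i * hu1'
    have hvmv : ∀ w : Fin 3 → ℝ, (vecMulVec u u) *ᵥ w = (u ⬝ᵥ w) • u := by
      intro w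
      ext i
      simp only [Matrix.mulVec, dotProduct, Fin.sum_univ_three, Matrix.vecMulVec_apply,
        Pi.smul_apply, smul_eq_mul]
      ring
    refine ⟨u, hu1, ⟨u ⬝ᵥ (M *ᵥ u), ?_⟩, ?_⟩
    · calc M *ᵥ u = M *ᵥ (P *ᵥ u) := by rw [hPu]
        _ = (M * P) *ᵥ u := Matrix.mulVec_mulVec u M P
        _ = (P * M) *ᵥ u := by rw [hMP]
        _ = P *ᵥ (M *ᵥ u) := (Matrix.mulVec_mulVec u P M).symm
        _ = (u ⬝ᵥ (M *ᵥ u)) • u := by rw [← hu2]; exact hvmv _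
    · rw [hu2, hPdef]
      module
  · -- impossible case : trace ≠ -1 forces Rt = 1
    exfalso
    by_cases ht1 : t = 1
    · have h := key2 0 0
      rw [ht1] at h
      norm_num [Matrix.one_apply] at h
    · have hco : (t^2 - 1)/2 ≠ 0 := by
        intro hco
        have : (t-1)*(t+1) = 0 := by linarith [hco]
        rcases mul_eq_zero.mp this with h' | h'
        · exact ht1 (by linarith)
        · exact ht (by linarith)
      set c : ℝ := (t + 1) / ((t^2 - 1)/2) with hcdef
      have hc : ∀ i j, Rt i j = c * (1 : Matrix (Fin 3) (Fin 3) ℝ) i j := by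
        intro i j
        rw [hcdef, div_mul_eq_mul_div, eq_div_iff hco]
        linear_combination key2 i j
      have hc2 : c * c = 1 := by
        have h := congrFun (congrFun hR2 0) 0
        simp only [Matrix.mul_apply, Fin.sum_univ_three, Matrix.one_apply] at h
        rw [hc 0 0, hc 0 1, hc 1 0, hc 0 2, hc 2 0] at h
        simp [Matrix.one_apply] at h
        linarith [h]
      have hc3 : c * c * c = 1 := by
        have h := hR.2.2
        rw [Matrix.det_fin_three] at h
        rw [hc 0 0, hc 1 1, hc 2 2, hc 0 1, hc 1 0, hc 0 2, hc 2 0, hc 1 2, hc 2 1] at h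
        simp [Matrix.one_apply] at h
        linarith [h]
      have hc1 : c = 1 := by nlinarith [hc2, hc3]
      apply hne
      ext i j
      rw [hc i j, hc1, one_mul]
end
end

section
/- Consider the hybrid linear system x' = Ax on intervals [t_{k-1}, t_k] and jumps x⁺ = (I - KC)x at times t_k, with T_m ≤ t_k - t_{k-1} ≤ T_M. Suppose there exists a symmetric positive definite P ∈ R^{6×6} such that (I-KC)^T Φ(τ)^T P Φ(τ)(I-KC) - P < 0 for all τ ∈ [T_m, T_M], where Φ(τ) = exp(Aτ). Then every solution converges exponentially to zero. -/
open Matrix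

noncomputable section

section HybridAux

attribute [local instance] Matrix.linftyOpNormedAddCommGroup Matrix.linftyOpNormedRing
  Matrix.linftyOpNormedAlgebra

/-- `M ↦ (mulVec by M)` as a linear map into continuous linear maps. -/
def matToCLM : Matrix (Fin 6) (Fin 6) ℝ →ₗ[ℝ] ((Fin 6 → ℝ) →L[ℝ] (Fin 6 → ℝ)) where
  toFun M := LinearMap.toContinuousLinearMap M.mulVecLin
  map_add' M N := by ext w; simp [Matrix.add_mulVec]
  map_smul' c M := by ext w; simp [Matrix.smul_mulVec]

lemma matToCLM_apply (M : Matrix (Fin 6) (Fin 6) ℝ) (w : Fin 6 → ℝ) :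
    matToCLM M w = M.mulVec w := rfl

lemma mulVec_norm_le (M : Matrix (Fin 6) (Fin 6) ℝ) (w : Fin 6 → ℝ) :
    ‖M.mulVec w‖ ≤ ‖matToCLM M‖ * ‖w‖ := by
  rw [← matToCLM_apply]
  exact (matToCLM M).le_opNorm w

lemma exp_smul_continuous (A : Matrix (Fin 6) (Fin 6) ℝ) :
    Continuous fun τ : ℝ => NormedSpace.exp (τ • A) :=
  NormedSpace.exp_continuous.comp (continuous_id.smul continuous_const)

/-- A uniform bound for the flow maps over a compact time interval. -/
lemma exists_flow_bound (A : Matrix (Fin 6) (Fin 6) ℝ) (TM : ℝ) :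
    ∃ B : ℝ, 1 ≤ B ∧ ∀ σ ∈ Set.Icc (0:ℝ) TM, ∀ w : Fin 6 → ℝ,
      ‖(NormedSpace.exp (σ • A)).mulVec w‖ ≤ B * ‖w‖ := by
  have hc : Continuous fun σ : ℝ => ‖matToCLM (NormedSpace.exp (σ • A))‖ :=
    ((LinearMap.continuous_of_finiteDimensional matToCLM).comp (exp_smul_continuous A)).norm
  obtain ⟨Cb, hCb⟩ := (isCompact_Icc (a := (0:ℝ)) (b := TM)).exists_bound_of_continuousOn
    hc.continuousOn
  refine ⟨max Cb 1, le_max_right _ _, fun σ hσ w => ?_⟩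
  refine (mulVec_norm_le _ w).trans (mul_le_mul_of_nonneg_right ?_ (norm_nonneg w))
  exact (le_abs_self _).trans (((Real.norm_eq_abs _) ▸ hCb σ hσ).trans (le_max_left _ _))

/-- `M ↦ M.mulVec v` as a continuous linear map. -/
def mulVecConstCLM (v : Fin 6 → ℝ) : Matrix (Fin 6) (Fin 6) ℝ →L[ℝ] (Fin 6 → ℝ) :=
  LinearMap.toContinuousLinearMap
    { toFun := fun M => M.mulVec v
      map_add' := fun M N => Matrix.add_mulVec M N v
      map_smul' := fun c M => Matrix.smul_mulVec c M v }

/-- Uniqueness: any solution of `x' = Ax` equals the matrix-exponential flow. -/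
lemma flow_eq (A : Matrix (Fin 6) (Fin 6) ℝ) (f : ℝ → Fin 6 → ℝ) (a b : ℝ)
    (hf : ∀ s ∈ Set.Icc a b, HasDerivAt f (A.mulVec (f s)) s) :
    ∀ s ∈ Set.Icc a b, f s = (NormedSpace.exp ((s - a) • A)).mulVec (f a) := by
  set g : ℝ → Fin 6 → ℝ := fun s => (NormedSpace.exp ((s - a) • A)).mulVec (f a) with hg
  have hgderiv : ∀ s : ℝ, HasDerivAt g (A.mulVec (g s)) s := by
    intro s
    have h1 : HasDerivAt (fun u : ℝ => NormedSpace.exp (u • A))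
        (A * NormedSpace.exp ((s - a) • A)) (s - a) :=
      hasDerivAt_exp_smul_const' A (s - a)
    have h2 : HasDerivAt (fun u : ℝ => u - a) 1 s := (hasDerivAt_id s).sub_const a
    have h3 : HasDerivAt (fun u : ℝ => NormedSpace.exp ((u - a) • A))
        (A * NormedSpace.exp ((s - a) • A)) s := by
      have h := h1.scomp s h2
      rw [one_smul] at h
      exact h
    have h4 := (mulVecConstCLM (f a)).hasFDerivAt.comp_hasDerivAt s h3
    have h5 : ∀ M : Matrix (Fin 6) (Fin 6) ℝ,
        mulVecConstCLM (f a) M = M.mulVec (f a) := fun _ => rfl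
    have hfun : (⇑(mulVecConstCLM (f a)) ∘ fun u => NormedSpace.exp ((u - a) • A)) = g := by
      funext u; exact h5 _
    rw [hfun] at h4
    rw [hg]
    beta_reduce
    rw [Matrix.mulVec_mulVec]
    exact h4
  have hLip : ∀ τ : ℝ, LipschitzWith ‖matToCLM A‖₊ (fun w : Fin 6 → ℝ => A.mulVec w) := by
    intro τ
    have := (matToCLM A).lipschitz
    exact this
  have key := ODE_solution_unique (v := fun _ : ℝ => fun w : Fin 6 → ℝ => A.mulVec w)
    (f := f) (g := g) (a := a) (b := b)
    hLip
    (fun s hs => (hf s hs).continuousAt.continuousWithinAt)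
    (fun s hs => (hf s (Set.mem_Icc_of_Ico hs)).hasDerivWithinAt)
    (fun s hs => (hgderiv s).continuousAt.continuousWithinAt)
    (fun s hs => (hgderiv s).hasDerivWithinAt)
    (by simp [hg])
  exact fun s hs => key hs

end HybridAux

lemma quad_smul (P : Matrix (Fin 6) (Fin 6) ℝ) (c : ℝ) (v : Fin 6 → ℝ) :
    (c • v) ⬝ᵥ P.mulVec (c • v) = c ^ 2 * (v ⬝ᵥ P.mulVec v) := by
  simp [Matrix.mulVec_smul, smul_dotProduct, dotProduct_smul, smul_eq_mul]; ring

lemma quad_transfer (Q P : Matrix (Fin 6) (Fin 6) ℝ) (v : Fin 6 → ℝ) :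
    v ⬝ᵥ (Qᵀ * P * Q).mulVec v = (Q.mulVec v) ⬝ᵥ P.mulVec (Q.mulVec v) := by
  rw [mul_assoc, ← Matrix.mulVec_mulVec, ← Matrix.mulVec_mulVec]
  rw [Matrix.dotProduct_mulVec, Matrix.vecMul_transpose]

lemma contV (P : Matrix (Fin 6) (Fin 6) ℝ) :
    Continuous fun v : Fin 6 → ℝ => v ⬝ᵥ P.mulVec v :=
  continuous_id.dotProduct (continuous_const.matrix_mulVec continuous_id)

/-- Hybrid linear system `x' = Ax` between jumps and `x⁺ = (I - KC)x` at jump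
times `t_k` with `T_m ≤ t_{k+1} - t_k ≤ T_M`. If there is a symmetric positive
definite `P` with `(I-KC)ᵀΦ(τ)ᵀPΦ(τ)(I-KC) - P ≺ 0` for all `τ ∈ [T_m, T_M]`,
where `Φ(τ) = exp(Aτ)`, then every solution converges exponentially to zero. -/
theorem hybrid_exponential_stability
    (A : Matrix (Fin 6) (Fin 6) ℝ) (C : Matrix (Fin 3) (Fin 6) ℝ)
    (K : Matrix (Fin 6) (Fin 3) ℝ) (Tm TM : ℝ) (hTm : 0 < Tm) (hTM : Tm ≤ TM)
    (P : Matrix (Fin 6) (Fin 6) ℝ) (hPsym : Pᵀ = P) (hP : P.PosDef)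
    (hLMI : ∀ τ ∈ Set.Icc Tm TM,
      (P - (1 - K * C)ᵀ * (NormedSpace.exp (τ • A))ᵀ * P *
        NormedSpace.exp (τ • A) * (1 - K * C)).PosDef)
    -- admissible jump-time sequence
    (t : ℕ → ℝ) (ht0 : t 0 = 0)
    (hstep : ∀ k, Tm ≤ t (k + 1) - t k ∧ t (k + 1) - t k ≤ TM)
    -- solution arcs: `x k` is the state on `[t k, t (k+1)]`
    (x : ℕ → ℝ → Fin 6 → ℝ)
    (hflow : ∀ k, ∀ s ∈ Set.Icc (t k) (t (k + 1)),
      HasDerivAt (x k) (A.mulVec (x k s)) s)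
    (hjump : ∀ k, x (k + 1) (t (k + 1)) = (1 - K * C).mulVec (x k (t (k + 1)))) :
    ∃ c lam : ℝ, 0 < c ∧ 0 < lam ∧
      ∀ k, ∀ s ∈ Set.Icc (t k) (t (k + 1)),
        ‖x k s‖ ≤ c * Real.exp (-lam * s) * ‖x 0 0‖ := by
  classical
  set Φ : ℝ → Matrix (Fin 6) (Fin 6) ℝ := fun τ => NormedSpace.exp (τ • A) with hΦdef
  set J : Matrix (Fin 6) (Fin 6) ℝ := 1 - K * C with hJdef
  set V : (Fin 6 → ℝ) → ℝ := fun v => v ⬝ᵥ P.mulVec v with hVdef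
  set H : ℝ → Matrix (Fin 6) (Fin 6) ℝ := fun τ => Φ τ * J with hHdef
  -- basic positivity of V
  have hVpos : ∀ v : Fin 6 → ℝ, v ≠ 0 → 0 < V v := by
    intro v hv
    simpa [hVdef] using hP.dotProduct_mulVec_pos hv
  have hV0 : V 0 = 0 := by simp [hVdef]
  have hVnonneg : ∀ v, 0 ≤ V v := by
    intro v
    by_cases hv : v = 0
    · simp [hv, hV0]
    · exact (hVpos v hv).le
  -- the LMI in quadratic-form language
  have hLMI' : ∀ τ ∈ Set.Icc Tm TM, ∀ v : Fin 6 → ℝ, v ≠ 0 →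
      V ((H τ).mulVec v) < V v := by
    intro τ hτ v hv
    have h := (hLMI τ hτ).dotProduct_mulVec_pos hv
    have hEq : (1 - K * C)ᵀ * (Φ τ)ᵀ * P * Φ τ * (1 - K * C) = (H τ)ᵀ * P * H τ := by
      simp [hHdef, hJdef, Matrix.transpose_mul, mul_assoc]
    rw [star_trivial, hEq, Matrix.sub_mulVec, dotProduct_sub, quad_transfer] at h
    have : (0:ℝ) < V v - V ((H τ).mulVec v) := by simpa [hVdef] using h
    linarith
  -- quadratic homogeneity
  have hVsmul : ∀ (c : ℝ) (v : Fin 6 → ℝ), V (c • v) = c ^ 2 * V v := by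
    intro c v; simpa [hVdef] using quad_smul P c v
  -- continuity facts
  have hΦcont : Continuous Φ := exp_smul_continuous A
  have hHcont : Continuous H := hΦcont.matrix_mul continuous_const
  have hVcont : Continuous V := contV P
  -- the unit sphere
  have hsphere_ne : (Metric.sphere (0 : Fin 6 → ℝ) 1).Nonempty := by
    refine ⟨fun _ => 1, ?_⟩
    simp [pi_norm_const]
  have hsphere_nz : ∀ v ∈ Metric.sphere (0 : Fin 6 → ℝ) 1, v ≠ 0 := by
    intro v hv h0
    simp [h0] at hv
  -- uniform contraction factor ρ
  obtain ⟨ρ, hρ1, hρ0, hρbound⟩ : ∃ ρ : ℝ, ρ < 1 ∧ 0 ≤ ρ ∧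
      ∀ τ ∈ Set.Icc Tm TM, ∀ v : Fin 6 → ℝ, V ((H τ).mulVec v) ≤ ρ * V v := by
    set S : Set (ℝ × (Fin 6 → ℝ)) := Set.Icc Tm TM ×ˢ Metric.sphere 0 1 with hSdef
    have hScomp : IsCompact S := isCompact_Icc.prod (isCompact_sphere 0 1)
    have hSne : S.Nonempty := ⟨(Tm, hsphere_ne.choose),
      ⟨Set.mem_Icc.2 ⟨le_refl _, hTM⟩, hsphere_ne.choose_spec⟩⟩
    set q : ℝ × (Fin 6 → ℝ) → ℝ := fun p => V ((H p.1).mulVec p.2) / V p.2 with hqdef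
    have hqcont : ContinuousOn q S := by
      apply ContinuousOn.div
      · exact (hVcont.comp ((hHcont.comp continuous_fst).matrix_mulVec continuous_snd)).continuousOn
      · exact (hVcont.comp continuous_snd).continuousOn
      · intro p hp
        exact (hVpos p.2 (hsphere_nz p.2 hp.2)).ne'
    obtain ⟨p₀, hp₀S, hmax⟩ := hScomp.exists_isMaxOn hSne hqcont
    refine ⟨q p₀, ?_, ?_, ?_⟩
    · have h2 := hVpos p₀.2 (hsphere_nz p₀.2 hp₀S.2)
      exact (div_lt_one h2).2 (hLMI' p₀.1 hp₀S.1 p₀.2 (hsphere_nz p₀.2 hp₀S.2))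
    · have := hmax hSne.choose_spec  -- q at some point ≤ q p₀? no: hmax : IsMaxOn q S p₀
      have h1 : q hSne.choose ≤ q p₀ := hmax hSne.choose_spec
      refine le_trans ?_ h1
      exact div_nonneg (hVnonneg _) (hVnonneg _)
    · intro τ hτ v
      by_cases hv : v = 0
      · simp [hv, hV0, Matrix.mulVec_zero]
      · have hvn : ‖v‖ ≠ 0 := norm_ne_zero_iff.2 hv
        set u : Fin 6 → ℝ := ‖v‖⁻¹ • v with hudef
        have hu_sphere : u ∈ Metric.sphere (0 : Fin 6 → ℝ) 1 := by
          simp [hudef, norm_smul, abs_of_nonneg (inv_nonneg.2 (norm_nonneg v)),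
            inv_mul_cancel₀ hvn]
        have hqu : q (τ, u) ≤ q p₀ := hmax ⟨hτ, hu_sphere⟩
        have hVu : 0 < V u := hVpos u (hsphere_nz u hu_sphere)
        have h2 : V ((H τ).mulVec u) ≤ q p₀ * V u := by
          have := (div_le_iff₀ hVu).1 hqu
          simpa [hqdef] using this
        have hveq : v = ‖v‖ • u := by
          rw [hudef, smul_smul, mul_inv_cancel₀ hvn, one_smul]
        calc V ((H τ).mulVec v) = V ((H τ).mulVec (‖v‖ • u)) := by rw [← hveq]
          _ = V (‖v‖ • (H τ).mulVec u) := by rw [Matrix.mulVec_smul]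
          _ = ‖v‖ ^ 2 * V ((H τ).mulVec u) := hVsmul _ _
          _ ≤ ‖v‖ ^ 2 * (q p₀ * V u) := by
              exact mul_le_mul_of_nonneg_left h2 (sq_nonneg _)
          _ = q p₀ * (‖v‖ ^ 2 * V u) := by ring
          _ = q p₀ * V v := by rw [← hVsmul, ← hveq]
  -- bounds m ≤ V ≤ Mx on the sphere, extended by homogeneity
  obtain ⟨um, humS, hum⟩ := (isCompact_sphere (0 : Fin 6 → ℝ) 1).exists_isMinOn
    hsphere_ne hVcont.continuousOn
  obtain ⟨uM, huMS, huM⟩ := (isCompact_sphere (0 : Fin 6 → ℝ) 1).exists_isMaxOn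
    hsphere_ne hVcont.continuousOn
  set m : ℝ := V um with hmdef
  set Mx : ℝ := V uM with hMxdef
  have hm_pos : 0 < m := hVpos um (hsphere_nz um humS)
  have hMx_pos : 0 < Mx := hVpos uM (hsphere_nz uM huMS)
  have hscale : ∀ v : Fin 6 → ℝ, v ≠ 0 → ∃ u ∈ Metric.sphere (0 : Fin 6 → ℝ) 1,
      V v = ‖v‖ ^ 2 * V u := by
    intro v hv
    have hvn : ‖v‖ ≠ 0 := norm_ne_zero_iff.2 hv
    refine ⟨‖v‖⁻¹ • v, ?_, ?_⟩
    · simp [norm_smul, abs_of_nonneg (inv_nonneg.2 (norm_nonneg v)), inv_mul_cancel₀ hvn]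
    · rw [← hVsmul]
      congr 1
      rw [smul_smul, mul_inv_cancel₀ hvn, one_smul]
  have hVlow : ∀ v : Fin 6 → ℝ, m * ‖v‖ ^ 2 ≤ V v := by
    intro v
    by_cases hv : v = 0
    · simp [hv, hV0]
    · obtain ⟨u, huS, hEq⟩ := hscale v hv
      rw [hEq, mul_comm]
      exact mul_le_mul_of_nonneg_left (hum huS) (sq_nonneg _)
  have hVhigh : ∀ v : Fin 6 → ℝ, V v ≤ Mx * ‖v‖ ^ 2 := by
    intro v
    by_cases hv : v = 0
    · simp [hv, hV0]
    · obtain ⟨u, huS, hEq⟩ := hscale v hv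
      rw [hEq, mul_comm]
      exact mul_le_mul_of_nonneg_right (huM huS) (sq_nonneg _)
  -- contraction rate
  set ρ' : ℝ := (ρ + 1) / 2 with hρ'def
  have hρ'0 : 0 < ρ' := by positivity
  have hρ'1 : ρ' < 1 := by rw [hρ'def]; linarith
  have hρρ' : ρ ≤ ρ' := by rw [hρ'def]; linarith
  set r : ℝ := Real.sqrt ρ' with hrdef
  have hr0 : 0 < r := Real.sqrt_pos.2 hρ'0
  have hr1 : r < 1 := by
    rw [hrdef]
    rw [show (1:ℝ) = Real.sqrt 1 by simp]
    exact Real.sqrt_lt_sqrt hρ'0.le hρ'1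
  have hr2 : r ^ 2 = ρ' := Real.sq_sqrt hρ'0.le
  -- trajectory structure
  have hab : ∀ k, t k ≤ t (k + 1) := by
    intro k
    have := (hstep k).1
    linarith
  have hδmem : ∀ k, t (k + 1) - t k ∈ Set.Icc Tm TM := fun k => ⟨(hstep k).1, (hstep k).2⟩
  have hx : ∀ k, ∀ s ∈ Set.Icc (t k) (t (k + 1)),
      x k s = (Φ (s - t k)).mulVec (x k (t k)) := by
    intro k
    exact flow_eq A (x k) (t k) (t (k + 1)) (hflow k)
  set y : ℕ → Fin 6 → ℝ := fun k => x k (t k) with hydef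
  set z : ℕ → Fin 6 → ℝ := fun k => x k (t (k + 1)) with hzdef
  have hz : ∀ k, z k = (Φ (t (k + 1) - t k)).mulVec (y k) := by
    intro k
    exact hx k (t (k + 1)) ⟨hab k, le_refl _⟩
  have hyz : ∀ k, y (k + 1) = J.mulVec (z k) := fun k => hjump k
  have hrec : ∀ k, z (k + 1) = (H (t (k + 2) - t (k + 1))).mulVec (z k) := by
    intro k
    rw [hz (k + 1), hyz k, Matrix.mulVec_mulVec]
  -- Lyapunov decrease along the pre-jump states
  have hVz : ∀ k, V (z k) ≤ ρ' ^ k * V (z 0) := by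
    intro k
    induction k with
    | zero => simp
    | succ n ih =>
      have h1 : V (z (n + 1)) ≤ ρ * V (z n) := by
        rw [hrec n]
        exact hρbound _ (hδmem (n + 1)) (z n)
      calc V (z (n + 1)) ≤ ρ * V (z n) := h1
        _ ≤ ρ' * (ρ' ^ n * V (z 0)) := by
            apply mul_le_mul hρρ' ih (hVnonneg _)
            exact hρ'0.le
        _ = ρ' ^ (n + 1) * V (z 0) := by ring
  -- norm decay of pre-jump states
  set C0 : ℝ := Real.sqrt (Mx / m) with hC0def
  have hC0pos : 0 < C0 := Real.sqrt_pos.2 (by positivity)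
  have hC0sq : C0 ^ 2 = Mx / m := Real.sq_sqrt (by positivity)
  have hzk : ∀ k, ‖z k‖ ≤ C0 * r ^ k * ‖z 0‖ := by
    intro k
    have h1 : m * ‖z k‖ ^ 2 ≤ ρ' ^ k * (Mx * ‖z 0‖ ^ 2) := by
      calc m * ‖z k‖ ^ 2 ≤ V (z k) := hVlow _
        _ ≤ ρ' ^ k * V (z 0) := hVz k
        _ ≤ ρ' ^ k * (Mx * ‖z 0‖ ^ 2) :=
            mul_le_mul_of_nonneg_left (hVhigh _) (pow_nonneg hρ'0.le _)
    have h2 : ‖z k‖ ^ 2 ≤ (C0 * r ^ k * ‖z 0‖) ^ 2 := by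
      have : (C0 * r ^ k * ‖z 0‖) ^ 2 = (Mx / m) * (ρ' ^ k * ‖z 0‖ ^ 2) := by
        rw [mul_pow, mul_pow, hC0sq, ← pow_mul, mul_comm k 2, pow_mul, hr2]; ring
      rw [this]
      rw [div_mul_eq_mul_div, le_div_iff₀ hm_pos]
      nlinarith [h1]
    have h3 := Real.sqrt_le_sqrt h2
    rwa [Real.sqrt_sq (norm_nonneg _), Real.sqrt_sq (by positivity)] at h3
  -- flow bound
  obtain ⟨B, hB1, hB⟩ := exists_flow_bound A TM
  have hB0 : 0 < B := lt_of_lt_of_le one_pos hB1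
  set c₁ : ℝ := ‖matToCLM J‖ with hc₁def
  have hc₁0 : 0 ≤ c₁ := norm_nonneg _
  have hJbound : ∀ w : Fin 6 → ℝ, ‖J.mulVec w‖ ≤ c₁ * ‖w‖ := fun w => mulVec_norm_le J w
  -- time bounds
  have htnonneg : ∀ k, 0 ≤ t k := by
    intro k
    induction k with
    | zero => simp [ht0]
    | succ n ih => linarith [(hstep n).1, hTm]
  have htupper : ∀ k, t k ≤ k * TM := by
    intro k
    induction k with
    | zero => simp [ht0]
    | succ n ih =>
      have := (hstep n).2
      push_cast
      push_cast at ih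
      linarith
  -- decay rate
  set lam : ℝ := -Real.log r / TM with hlamdef
  have hTM0 : 0 < TM := lt_of_lt_of_le hTm hTM
  have hlogr : Real.log r < 0 := Real.log_neg hr0 hr1
  have hlam0 : 0 < lam := div_pos (neg_pos.2 hlogr) hTM0
  have hkey : ∀ (k : ℕ) (s : ℝ), s ≤ ((k : ℝ) + 1) * TM → r ^ (k + 1) ≤ Real.exp (-lam * s) := by
    intro k s hs
    have h1 : -lam * s = Real.log r * (s / TM) := by
      rw [hlamdef]; field_simp
    have hord : s / TM ≤ (k : ℝ) + 1 := by
      rw [div_le_iff₀ hTM0]; linarith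
    have h2 : Real.log r * ((k : ℝ) + 1) ≤ Real.log r * (s / TM) :=
      mul_le_mul_of_nonpos_left hord hlogr.le
    have h3 : Real.exp (((k + 1 : ℕ) : ℝ) * Real.log r) = r ^ (k + 1) := by
      rw [Real.exp_nat_mul, Real.exp_log hr0]
    calc r ^ (k + 1) = Real.exp (((k + 1 : ℕ) : ℝ) * Real.log r) := h3.symm
      _ ≤ Real.exp (-lam * s) := by
          refine Real.exp_le_exp.2 ?_
          rw [h1]
          push_cast
          linarith
  -- the constant
  set c : ℝ := B * B * c₁ * C0 * (r⁻¹ * r⁻¹) + B * r⁻¹ + 1 with hcdef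
  have hT1 : 0 ≤ B * B * c₁ * C0 * (r⁻¹ * r⁻¹) := by positivity
  have hT2 : 0 < B * r⁻¹ := by positivity
  have hc0 : 0 < c := by rw [hcdef]; linarith
  refine ⟨c, lam, hc0, hlam0, ?_⟩
  have hy00 : x 0 0 = y 0 := by rw [hydef]; simp [ht0]
  -- generic within-interval bound
  have hflowb : ∀ k, ∀ s ∈ Set.Icc (t k) (t (k + 1)), ‖x k s‖ ≤ B * ‖y k‖ := by
    intro k s hs
    rw [hx k s hs]
    refine hB (s - t k) ⟨by linarith [hs.1], ?_⟩ (y k)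
    have := (hstep k).2
    linarith [hs.2]
  have hz0b : ‖z 0‖ ≤ B * ‖y 0‖ := by
    rw [hz 0]
    refine hB (t 1 - t 0) ⟨by linarith [(hstep 0).1], (hstep 0).2⟩ (y 0)
  intro k s hs
  have hsnn : 0 ≤ s := le_trans (htnonneg k) hs.1
  have hsub : s ≤ ((k : ℝ) + 1) * TM := by
    have h1 : s ≤ t (k + 1) := hs.2
    have h2 := htupper (k + 1)
    push_cast at h2
    linarith
  have hE0 : 0 < Real.exp (-lam * s) := Real.exp_pos _
  have hrE : r ^ (k + 1) ≤ Real.exp (-lam * s) := hkey k s hsub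
  match k, hs, hsub, hrE with
  | 0, hs, hsub, hrE =>
    have h1 : ‖x 0 s‖ ≤ B * ‖y 0‖ := hflowb 0 s hs
    have hr1' : r ≤ Real.exp (-lam * s) := by simpa using hrE
    calc ‖x 0 s‖ ≤ B * ‖y 0‖ := h1
      _ = B * r⁻¹ * r * ‖y 0‖ := by field_simp
      _ ≤ B * r⁻¹ * Real.exp (-lam * s) * ‖y 0‖ := by
          refine mul_le_mul_of_nonneg_right ?_ (norm_nonneg _)
          exact mul_le_mul_of_nonneg_left hr1' (by positivity)
      _ ≤ c * Real.exp (-lam * s) * ‖y 0‖ := by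
          refine mul_le_mul_of_nonneg_right ?_ (norm_nonneg _)
          refine mul_le_mul_of_nonneg_right ?_ hE0.le
          rw [hcdef]; linarith
      _ = c * Real.exp (-lam * s) * ‖x 0 0‖ := by rw [hy00]
  | (n + 1), hs, hsub, hrE =>
    have h1 : ‖x (n + 1) s‖ ≤ B * ‖y (n + 1)‖ := hflowb (n + 1) s hs
    have h2 : ‖y (n + 1)‖ ≤ c₁ * ‖z n‖ := by rw [hyz n]; exact hJbound (z n)
    have h3 : ‖z n‖ ≤ C0 * r ^ n * ‖z 0‖ := hzk n
    have h4 : r ^ n = r ^ (n + 2) * (r⁻¹ * r⁻¹) := by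
      field_simp
      ring
    have h5 : r ^ (n + 2) ≤ Real.exp (-lam * s) := hrE
    have hbig : ‖x (n + 1) s‖ ≤ B * (c₁ * (C0 * r ^ n * (B * ‖y 0‖))) := by
      calc ‖x (n + 1) s‖ ≤ B * ‖y (n + 1)‖ := h1
        _ ≤ B * (c₁ * ‖z n‖) := mul_le_mul_of_nonneg_left h2 hB0.le
        _ ≤ B * (c₁ * (C0 * r ^ n * ‖z 0‖)) := by
            refine mul_le_mul_of_nonneg_left ?_ hB0.le
            exact mul_le_mul_of_nonneg_left h3 hc₁0
        _ ≤ B * (c₁ * (C0 * r ^ n * (B * ‖y 0‖))) := by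
            refine mul_le_mul_of_nonneg_left ?_ hB0.le
            refine mul_le_mul_of_nonneg_left ?_ hc₁0
            exact mul_le_mul_of_nonneg_left hz0b (by positivity)
    have hfin : B * (c₁ * (C0 * r ^ n * (B * ‖y 0‖)))
        = (B * B * c₁ * C0 * (r⁻¹ * r⁻¹)) * r ^ (n + 2) * ‖y 0‖ := by
      rw [h4]; ring
    calc ‖x (n + 1) s‖ ≤ B * (c₁ * (C0 * r ^ n * (B * ‖y 0‖))) := hbig
      _ = (B * B * c₁ * C0 * (r⁻¹ * r⁻¹)) * r ^ (n + 2) * ‖y 0‖ := hfin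
      _ ≤ (B * B * c₁ * C0 * (r⁻¹ * r⁻¹)) * Real.exp (-lam * s) * ‖y 0‖ := by
          refine mul_le_mul_of_nonneg_right ?_ (norm_nonneg _)
          exact mul_le_mul_of_nonneg_left h5 hT1
      _ ≤ c * Real.exp (-lam * s) * ‖y 0‖ := by
          refine mul_le_mul_of_nonneg_right ?_ (norm_nonneg _)
          refine mul_le_mul_of_nonneg_right ?_ hE0.le
          rw [hcdef]; linarith
      _ = c * Real.exp (-lam * s) * ‖x 0 0‖ := by rw [hy00]
end
end

section
/- Let R̃ ∈ SO(3) and g ∈ R^3. Then ‖(I₃ - R̃)g‖ ≤ 2‖g‖·|R̃|_I, where |R̃|_I = sqrt(tr(I₃ - R̃)/4) is the normalized distance on SO(3). In particular the gravity disturbance term vanishes as R̃ → I₃. -/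
set_option maxHeartbeats 1000000

open Matrix

/-- Scalar core of the bound: for entries of a special orthogonal matrix
(encoded via orthonormality of columns and the adjugate identities), the
quadratic form `gᵀ(2I - R - Rᵀ)g` is at most `(3 - tr R)‖g‖²`. -/
private lemma so3_scalar_core (r00 r01 r02 r10 r11 r12 r20 r21 r22 g0 g1 g2 : ℝ)
    (a00 : r11 * r22 - r12 * r21 = r00)
    (a01 : -(r01 * r22) + r02 * r21 = r10)
    (a02 : r01 * r12 - r02 * r11 = r20)
    (a10 : -(r10 * r22) + r12 * r20 = r01)
    (a11 : r00 * r22 - r02 * r20 = r11)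
    (a12 : -(r00 * r12) + r02 * r10 = r21)
    (a20 : r10 * r21 - r11 * r20 = r02)
    (a21 : -(r00 * r21) + r01 * r20 = r12)
    (a22 : r00 * r11 - r01 * r10 = r22)
    (e00 : r00 * r00 + r10 * r10 + r20 * r20 = 1)
    (e11 : r01 * r01 + r11 * r11 + r21 * r21 = 1)
    (e22 : r02 * r02 + r12 * r12 + r22 * r22 = 1)
    (e01 : r00 * r01 + r10 * r11 + r20 * r21 = 0)
    (e02 : r00 * r02 + r10 * r12 + r20 * r22 = 0)
    (e12 : r01 * r02 + r11 * r12 + r21 * r22 = 0) :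
    (g0 - (r00 * g0 + r01 * g1 + r02 * g2)) ^ 2 +
      (g1 - (r10 * g0 + r11 * g1 + r12 * g2)) ^ 2 +
      (g2 - (r20 * g0 + r21 * g1 + r22 * g2)) ^ 2 ≤
      (g0 ^ 2 + g1 ^ 2 + g2 ^ 2) * (3 - (r00 + r11 + r22)) := by
  have key : 4 * ((g0 ^ 2 + g1 ^ 2 + g2 ^ 2) * (3 - (r00 + r11 + r22)) -
      ((g0 - (r00 * g0 + r01 * g1 + r02 * g2)) ^ 2 +
       (g1 - (r10 * g0 + r11 * g1 + r12 * g2)) ^ 2 +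
       (g2 - (r20 * g0 + r21 * g1 + r22 * g2)) ^ 2)) =
      ((r21 - r12) * g0 + (r02 - r20) * g1 + (r10 - r01) * g2) ^ 2 +
      ((2 * r00 + 1 - (r00 + r11 + r22)) * g0 + (r01 + r10) * g1 + (r02 + r20) * g2) ^ 2 +
      ((r01 + r10) * g0 + (2 * r11 + 1 - (r00 + r11 + r22)) * g1 + (r12 + r21) * g2) ^ 2 +
      ((r02 + r20) * g0 + (r12 + r21) * g1 + (2 * r22 + 1 - (r00 + r11 + r22)) * g2) ^ 2 := by
    linear_combination (-5 * g0 ^ 2 - g1 ^ 2 - g2 ^ 2) * e00 +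
      (-(g0 ^ 2) - 5 * g1 ^ 2 - g2 ^ 2) * e11 +
      (-(g0 ^ 2) - g1 ^ 2 - 5 * g2 ^ 2) * e22 + (-8 * g0 * g1) * e01 +
      (-8 * g0 * g2) * e02 + (-8 * g1 * g2) * e12 +
      (-2 * g0 ^ 2 + 2 * g1 ^ 2 + 2 * g2 ^ 2) * a00 +
      (2 * g0 ^ 2 - 2 * g1 ^ 2 + 2 * g2 ^ 2) * a11 +
      (2 * g0 ^ 2 + 2 * g1 ^ 2 - 2 * g2 ^ 2) * a22 + (-4 * g0 * g1) * a01 +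
      (-4 * g0 * g1) * a10 + (-4 * g0 * g2) * a02 + (-4 * g0 * g2) * a20 +
      (-4 * g1 * g2) * a12 + (-4 * g1 * g2) * a21
  linarith [key,
    sq_nonneg ((r21 - r12) * g0 + (r02 - r20) * g1 + (r10 - r01) * g2),
    sq_nonneg ((2 * r00 + 1 - (r00 + r11 + r22)) * g0 + (r01 + r10) * g1 + (r02 + r20) * g2),
    sq_nonneg ((r01 + r10) * g0 + (2 * r11 + 1 - (r00 + r11 + r22)) * g1 + (r12 + r21) * g2),
    sq_nonneg ((r02 + r20) * g0 + (r12 + r21) * g1 + (2 * r22 + 1 - (r00 + r11 + r22)) * g2)]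

private lemma so3_scalar_trace (r00 r10 r20 r01 r11 r21 r02 r12 r22 : ℝ)
    (e00 : r00 * r00 + r10 * r10 + r20 * r20 = 1)
    (e11 : r01 * r01 + r11 * r11 + r21 * r21 = 1)
    (e22 : r02 * r02 + r12 * r12 + r22 * r22 = 1) :
    (0:ℝ) ≤ 3 - (r00 + r11 + r22) := by
  have k0 : (r00 - 1) * (r00 - 1) ≥ 0 := mul_self_nonneg _
  have k1 : (r11 - 1) * (r11 - 1) ≥ 0 := mul_self_nonneg _
  have k2 : (r22 - 1) * (r22 - 1) ≥ 0 := mul_self_nonneg _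
  nlinarith [e00, e11, e22, k0, k1, k2, mul_self_nonneg r10, mul_self_nonneg r20,
    mul_self_nonneg r01, mul_self_nonneg r21, mul_self_nonneg r02, mul_self_nonneg r12]

/-- For `R̃ ∈ SO(3)` and `g ∈ ℝ³`, `‖(I - R̃)g‖ ≤ 2‖g‖·|R̃|_I`, where
`|R̃|_I = √(tr(I - R̃)/4)` and Euclidean norms are written via dot products. -/
theorem gravity_disturbance_bound (Rt : Matrix (Fin 3) (Fin 3) ℝ)
    (hR : SO3 Rt) (g : Fin 3 → ℝ) :
    Real.sqrt (((1 - Rt).mulVec g) ⬝ᵥ ((1 - Rt).mulVec g)) ≤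
      2 * Real.sqrt (g ⬝ᵥ g) * Real.sqrt ((1 - Rt).trace / 4) := by
  obtain ⟨h1, h2, h3⟩ := hR
  -- the adjugate of a rotation is its transpose
  have hadj : Rt.adjugate = Rtᵀ := by
    have h4 : Rt * Rt.adjugate = 1 := by rw [Matrix.mul_adjugate, h3, one_smul]
    calc Rt.adjugate = 1 * Rt.adjugate := (one_mul _).symm
      _ = Rtᵀ * Rt * Rt.adjugate := by rw [h1]
      _ = Rtᵀ * (Rt * Rt.adjugate) := by rw [Matrix.mul_assoc]
      _ = Rtᵀ := by rw [h4, Matrix.mul_one]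
  have ha := hadj
  rw [Matrix.adjugate_fin_three] at ha
  -- entries of the adjugate equation
  have a00 : Rt 1 1 * Rt 2 2 - Rt 1 2 * Rt 2 1 = Rt 0 0 := by
    simpa using congrFun (congrFun ha 0) 0
  have a01 : -(Rt 0 1 * Rt 2 2) + Rt 0 2 * Rt 2 1 = Rt 1 0 := by
    simpa using congrFun (congrFun ha 0) 1
  have a02 : Rt 0 1 * Rt 1 2 - Rt 0 2 * Rt 1 1 = Rt 2 0 := by
    simpa using congrFun (congrFun ha 0) 2
  have a10 : -(Rt 1 0 * Rt 2 2) + Rt 1 2 * Rt 2 0 = Rt 0 1 := by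
    simpa using congrFun (congrFun ha 1) 0
  have a11 : Rt 0 0 * Rt 2 2 - Rt 0 2 * Rt 2 0 = Rt 1 1 := by
    simpa using congrFun (congrFun ha 1) 1
  have a12 : -(Rt 0 0 * Rt 1 2) + Rt 0 2 * Rt 1 0 = Rt 2 1 := by
    simpa using congrFun (congrFun ha 1) 2
  have a20 : Rt 1 0 * Rt 2 1 - Rt 1 1 * Rt 2 0 = Rt 0 2 := by
    simpa using congrFun (congrFun ha 2) 0
  have a21 : -(Rt 0 0 * Rt 2 1) + Rt 0 1 * Rt 2 0 = Rt 1 2 := by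
    simpa using congrFun (congrFun ha 2) 1
  have a22 : Rt 0 0 * Rt 1 1 - Rt 0 1 * Rt 1 0 = Rt 2 2 := by
    simpa using congrFun (congrFun ha 2) 2
  -- entries of the orthogonality equation Rᵀ R = 1
  have e00 : Rt 0 0 * Rt 0 0 + Rt 1 0 * Rt 1 0 + Rt 2 0 * Rt 2 0 = 1 := by
    simpa [Matrix.mul_apply, Fin.sum_univ_three, Matrix.one_apply] using
      congrFun (congrFun h1 0) 0
  have e11 : Rt 0 1 * Rt 0 1 + Rt 1 1 * Rt 1 1 + Rt 2 1 * Rt 2 1 = 1 := by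
    simpa [Matrix.mul_apply, Fin.sum_univ_three, Matrix.one_apply] using
      congrFun (congrFun h1 1) 1
  have e22 : Rt 0 2 * Rt 0 2 + Rt 1 2 * Rt 1 2 + Rt 2 2 * Rt 2 2 = 1 := by
    simpa [Matrix.mul_apply, Fin.sum_univ_three, Matrix.one_apply] using
      congrFun (congrFun h1 2) 2
  have e01 : Rt 0 0 * Rt 0 1 + Rt 1 0 * Rt 1 1 + Rt 2 0 * Rt 2 1 = 0 := by
    simpa [Matrix.mul_apply, Fin.sum_univ_three, Matrix.one_apply] using
      congrFun (congrFun h1 0) 1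
  have e02 : Rt 0 0 * Rt 0 2 + Rt 1 0 * Rt 1 2 + Rt 2 0 * Rt 2 2 = 0 := by
    simpa [Matrix.mul_apply, Fin.sum_univ_three, Matrix.one_apply] using
      congrFun (congrFun h1 0) 2
  have e12 : Rt 0 1 * Rt 0 2 + Rt 1 1 * Rt 1 2 + Rt 2 1 * Rt 2 2 = 0 := by
    simpa [Matrix.mul_apply, Fin.sum_univ_three, Matrix.one_apply] using
      congrFun (congrFun h1 1) 2
  -- scalar forms of the quantities in the goal
  have hGL : ((1 - Rt).mulVec g) ⬝ᵥ ((1 - Rt).mulVec g) =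
      (g 0 - (Rt 0 0 * g 0 + Rt 0 1 * g 1 + Rt 0 2 * g 2)) ^ 2 +
      (g 1 - (Rt 1 0 * g 0 + Rt 1 1 * g 1 + Rt 1 2 * g 2)) ^ 2 +
      (g 2 - (Rt 2 0 * g 0 + Rt 2 1 * g 1 + Rt 2 2 * g 2)) ^ 2 := by
    simp [Matrix.mulVec, dotProduct, Fin.sum_univ_three, Matrix.sub_apply,
      Matrix.one_apply] <;> ring
  have hGg : g ⬝ᵥ g = g 0 ^ 2 + g 1 ^ 2 + g 2 ^ 2 := by
    simp [dotProduct, Fin.sum_univ_three] <;> ring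
  have htr : (1 - Rt).trace = 3 - (Rt 0 0 + Rt 1 1 + Rt 2 2) := by
    simp [Matrix.trace, Fin.sum_univ_three, Matrix.sub_apply, Matrix.one_apply,
      Matrix.diag] <;> ring
  have hT3 : (0:ℝ) ≤ 3 - (Rt 0 0 + Rt 1 1 + Rt 2 2) :=
    so3_scalar_trace _ _ _ _ _ _ _ _ _ e00 e11 e22
  have hGnn : (0:ℝ) ≤ g 0 ^ 2 + g 1 ^ 2 + g 2 ^ 2 := by positivity
  have hmain := so3_scalar_core (Rt 0 0) (Rt 0 1) (Rt 0 2) (Rt 1 0) (Rt 1 1)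
    (Rt 1 2) (Rt 2 0) (Rt 2 1) (Rt 2 2) (g 0) (g 1) (g 2)
    a00 a01 a02 a10 a11 a12 a20 a21 a22 e00 e11 e22 e01 e02 e12
  rw [hGL, hGg, htr]
  have h4 : Real.sqrt ((3 - (Rt 0 0 + Rt 1 1 + Rt 2 2)) / 4) =
      Real.sqrt (3 - (Rt 0 0 + Rt 1 1 + Rt 2 2)) / 2 := by
    rw [Real.sqrt_div hT3, show Real.sqrt 4 = 2 by
      rw [show (4:ℝ) = 2 ^ 2 by norm_num, Real.sqrt_sq (by norm_num)]]
  calc Real.sqrt ((g 0 - (Rt 0 0 * g 0 + Rt 0 1 * g 1 + Rt 0 2 * g 2)) ^ 2 +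
      (g 1 - (Rt 1 0 * g 0 + Rt 1 1 * g 1 + Rt 1 2 * g 2)) ^ 2 +
      (g 2 - (Rt 2 0 * g 0 + Rt 2 1 * g 1 + Rt 2 2 * g 2)) ^ 2) ≤
      Real.sqrt ((g 0 ^ 2 + g 1 ^ 2 + g 2 ^ 2) * (3 - (Rt 0 0 + Rt 1 1 + Rt 2 2))) :=
        Real.sqrt_le_sqrt hmain
    _ = Real.sqrt (g 0 ^ 2 + g 1 ^ 2 + g 2 ^ 2) *
        Real.sqrt (3 - (Rt 0 0 + Rt 1 1 + Rt 2 2)) := Real.sqrt_mul hGnn _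
    _ = 2 * Real.sqrt (g 0 ^ 2 + g 1 ^ 2 + g 2 ^ 2) *
        (Real.sqrt (3 - (Rt 0 0 + Rt 1 1 + Rt 2 2)) / 2) := by ring
    _ = 2 * Real.sqrt (g 0 ^ 2 + g 1 ^ 2 + g 2 ^ 2) *
        Real.sqrt ((3 - (Rt 0 0 + Rt 1 1 + Rt 2 2)) / 4) := by rw [h4]
end
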